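/- Let G be a finite group, p a prime, and let B be a set of irreducible complex characters of G such that the sum over χ in B of χ(g)χ(h) equals 0 whenever g is p-regular and h is p-singular. Then the central idempotent sum over χ in B of e_χ = (χ(1)/|G|) Σ_{g∈G} χ(g⁻¹)g has all coefficients lying in the localization of the algebraic integers at a maximal ideal containing p; consequently B is a union of p-blocks of G. -/

import Mathlib

open scoped BigOperators
open Finset

noncomputable section

/-- `χ : G → ℂ` is an irreducible complex character of the finite group `G`. -/
def IsIrrChar (G : Type) [Group G] [Fintype G] (χ : G → ℂ) : Prop :=
  ∃ V : FDRep ℂ G, CategoryTheory.Simple V ∧ χ = V.character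

/-- An element is `p`-regular if `p` does not divide its order. -/
def pRegular (p : ℕ) {G : Type} [Monoid G] (g : G) : Prop :=
  ¬ p ∣ orderOf g

/-- The `p`-part of a natural number. -/
def pPart (p n : ℕ) : ℕ := p ^ (n.factorization p)

/-- The `p`-part of the order of the centralizer of `g`. -/
def centOrderP (p : ℕ) {G : Type} [Group G] (g : G) : ℕ :=
  pPart p (Nat.card (Subgroup.centralizer ({g} : Set G)))

/-- The usual inner product of class functions on a finite group. -/
def innerChar (G : Type) [Group G] [Fintype G] (χ ψ : G → ℂ) : ℂ :=
  (Fintype.card G : ℂ)⁻¹ * ∑ g : G, χ g * ψ g⁻¹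

/-- The group `ℤIrr(B)` of generalized characters of a block `B`, realized as the
`ℤ`-span of the characters in `B` inside the functions `G → ℂ`. -/
def ZIrr {G : Type} [Group G] [Fintype G] (B : Finset (G → ℂ)) : Submodule ℤ (G → ℂ) :=
  Submodule.span ℤ (B : Set (G → ℂ))

/-- A character `χ ∈ B` viewed as an element of `ℤIrr(B)`. -/
def elt {G : Type} [Group G] [Fintype G] {B : Finset (G → ℂ)} (χ : G → ℂ) (h : χ ∈ B) :
    ZIrr B :=
  ⟨χ, Submodule.subset_span (Finset.mem_coe.mpr h)⟩

/-- Broué's function `μ_I(g,h) = ∑_{χ ∈ Irr(B)} χ(g)·I(χ)(h)`. -/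
def muI {G H : Type} [Group G] [Fintype G] [Group H] [Fintype H]
    {B : Finset (G → ℂ)} {B' : Finset (H → ℂ)}
    (I : ZIrr B →ₗ[ℤ] ZIrr B') (g : G) (h : H) : ℂ :=
  ∑ χ ∈ B.attach, χ.1 g * ((I (elt χ.1 χ.2) : ZIrr B') : H → ℂ) h

/-- Broué's notion of a perfect isometry: an inner-product preserving `ℤ`-linear
bijection `ℤIrr(B) → ℤIrr(B')` satisfying the separation condition (sep) and the
integrality condition (int). -/
def IsPerfIso (p : ℕ) {G H : Type} [Group G] [Fintype G] [Group H] [Fintype H]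
    (B : Finset (G → ℂ)) (B' : Finset (H → ℂ)) (I : ZIrr B ≃ₗ[ℤ] ZIrr B') : Prop :=
  (∀ x y : ZIrr B,
      innerChar H (I x : H → ℂ) (I y : H → ℂ) = innerChar G (x : G → ℂ) (y : G → ℂ)) ∧
  (∀ (g : G) (h : H), Xor' (pRegular p g) (pRegular p h) → muI I.toLinearMap g h = 0) ∧
  (∀ (g : G) (h : H), IsIntegral ℤ (muI I.toLinearMap g h / (centOrderP p g : ℂ)) ∧
      IsIntegral ℤ (muI I.toLinearMap g h / (centOrderP p h : ℂ)))

/-- By Osima's theorem, `B` is a union of `p`-blocks iff it consists of irreducible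
characters and satisfies block orthogonality between `p`-regular and `p`-singular
columns. -/
def IsBlockUnion (p : ℕ) (G : Type) [Group G] [Fintype G] (B : Finset (G → ℂ)) : Prop :=
  (∀ χ ∈ B, IsIrrChar G χ) ∧
  ∀ g h : G, pRegular p g → ¬ pRegular p h → ∑ χ ∈ B, χ g * χ h = 0

/-- A `p`-block of `G`: a minimal nonempty union of blocks. -/
def IsBlock (p : ℕ) (G : Type) [Group G] [Fintype G] (B : Finset (G → ℂ)) : Prop :=
  IsBlockUnion p G B ∧ B.Nonempty ∧
    ∀ C ⊆ B, IsBlockUnion p G C → C = ∅ ∨ C = B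

/-! ### Auxiliary lemmas for the proof of Osima's theorem -/

private lemma isIntegral_multiset_sum (s : Multiset ℂ) (h : ∀ x ∈ s, IsIntegral ℤ x) :
    IsIntegral ℤ s.sum := by
  induction s using Multiset.induction_on with
  | empty => simpa using isIntegral_zero
  | cons a s ih =>
    rw [Multiset.sum_cons]
    exact (h a (Multiset.mem_cons_self a s)).add
      (ih fun x hx => h x (Multiset.mem_cons_of_mem hx))

/-- The trace of a matrix of finite multiplicative order is an algebraic integer. -/
private lemma trace_isIntegral {ι : Type*} [Fintype ι] [DecidableEq ι]
    (A : Matrix ι ι ℂ) (n : ℕ) (hn : n ≠ 0) (hApow : A ^ n = 1) :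
    IsIntegral ℤ A.trace := by
  rw [Matrix.trace_eq_sum_roots_charpoly]
  apply isIntegral_multiset_sum
  intro μ hμ
  have hroot : A.charpoly.IsRoot μ :=
    (Polynomial.mem_roots (A.charpoly_monic.ne_zero)).mp hμ
  have heval : A.charpoly.eval μ = (μ • (1 : Matrix ι ι ℂ) - A).det := by
    rw [Matrix.charpoly, ← Polynomial.coe_evalRingHom, RingHom.map_det]
    congr 1
    ext i j
    by_cases hij : i = j <;>
      simp [Matrix.charmatrix_apply, Matrix.map_apply, Matrix.one_apply, hij,
        Matrix.diagonal_apply, Matrix.sub_apply, Matrix.smul_apply]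
  have hnu : ¬ IsUnit (μ • (1 : Matrix ι ι ℂ) - A) := by
    rw [Matrix.isUnit_iff_isUnit_det, ← heval, hroot]
    simp
  have hspec : μ ∈ spectrum ℂ A := by
    rw [spectrum.mem_iff, Algebra.algebraMap_eq_smul_one]
    exact hnu
  have h2 := spectrum.subset_polynomial_aeval A
    ((Polynomial.X : Polynomial ℂ) ^ n - Polynomial.C 1) ⟨μ, hspec, rfl⟩
  have h3 : (Polynomial.aeval A) ((Polynomial.X : Polynomial ℂ) ^ n - Polynomial.C 1) = 0 := by
    simp [hApow]
  rw [h3] at h2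
  have h4 : μ ^ n - 1 = 0 := by
    by_contra hne
    have hu : IsUnit (algebraMap ℂ (Matrix ι ι ℂ) (Polynomial.eval μ
        ((Polynomial.X : Polynomial ℂ) ^ n - Polynomial.C 1)) - 0) := by
      rw [sub_zero]
      refine IsUnit.map _ (Ne.isUnit ?_)
      simpa using hne
    exact (spectrum.mem_iff.mp h2) hu
  refine ⟨(Polynomial.X : Polynomial ℤ) ^ n - Polynomial.C 1,
    Polynomial.monic_X_pow_sub_C 1 hn, ?_⟩
  simpa using h4

/-- Values of characters of finite groups are algebraic integers. -/
private lemma char_isIntegral {G : Type} [Group G] [Fintype G] (V : FDRep ℂ G) (g : G) :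
    IsIntegral ℤ (V.character g) := by
  classical
  have hn : Fintype.card G ≠ 0 := Fintype.card_ne_zero
  let b := Module.Free.chooseBasis ℂ V
  rw [FDRep.character, LinearMap.trace_eq_matrix_trace ℂ b]
  apply trace_isIntegral _ (Fintype.card G) hn
  rw [LinearMap.toMatrix_pow, ← map_pow, pow_card_eq_one, map_one, LinearMap.toMatrix_one]

/-- For a subgroup `P`, the sum of a character over `P` is `|P|` times a natural number. -/
private lemma exists_nat_avg {G : Type} [Group G] [Fintype G] (P : Subgroup G) [Fintype P]
    (V : FDRep ℂ G) :
    ∃ d : ℕ, ∑ x : P, V.character ↑x = (Fintype.card P : ℂ) * d := by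
  letI : Invertible ((Fintype.card ↥P : ℂ)) :=
    invertibleOfNonzero (Nat.cast_ne_zero.mpr Fintype.card_ne_zero)
  let W : FDRep ℂ ↥P := FDRep.of (V.ρ.comp P.subtype)
  have hchar : ∀ x : P, W.character x = V.character ↑x := fun x => rfl
  refine ⟨Module.finrank ℂ (Representation.invariants W.ρ), ?_⟩
  have h := FDRep.average_char_eq_finrank_invariants W
  calc ∑ x : P, V.character ↑x = ∑ x : ↥P, W.character x := by
        exact Finset.sum_congr rfl fun x _ => (hchar x).symm
    _ = (Fintype.card ↥P : ℂ) • (⅟(Fintype.card ↥P : ℂ) • ∑ x : ↥P, W.character x) := by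
        rw [smul_smul, mul_invOf_self, one_smul]
    _ = (Fintype.card ↥P : ℂ) * (Module.finrank ℂ (Representation.invariants W.ρ) : ℂ) := by
        rw [← h, Nat.card_eq_fintype_card, smul_eq_mul, smul_eq_mul, invOf_eq_inv]

/-- Every block union decomposes as a union of blocks. -/
private lemma blockUnion_decomp (p : ℕ) (G : Type) [Group G] [Fintype G] :
    ∀ B : Finset (G → ℂ), IsBlockUnion p G B →
      ∃ 𝒮 : Finset (Finset (G → ℂ)), (∀ C ∈ 𝒮, IsBlock p G C) ∧ B = 𝒮.sup id := by
  classical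
  intro B
  induction B using Finset.strongInductionOn with
  | _ B ih =>
    intro hB
    rcases eq_or_ne B ∅ with rfl | hne
    · exact ⟨∅, by simp, by simp⟩
    · -- pick a minimal nonempty block union inside B
      set T : Finset (Finset (G → ℂ)) :=
        B.powerset.filter (fun C => C.Nonempty ∧ IsBlockUnion p G C) with hT
      have hBT : B ∈ T := by
        simp only [hT, Finset.mem_filter, Finset.mem_powerset]
        exact ⟨Finset.Subset.refl B, Finset.nonempty_of_ne_empty hne, hB⟩
      obtain ⟨C, hCT, hCmin⟩ := T.exists_min_image Finset.card ⟨B, hBT⟩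
      simp only [hT, Finset.mem_filter, Finset.mem_powerset] at hCT
      obtain ⟨hCB, hCne, hCbu⟩ := hCT
      have hCblock : IsBlock p G C := by
        refine ⟨hCbu, hCne, fun C' hC'C hC'bu => ?_⟩
        rcases eq_or_ne C' ∅ with rfl | hC'ne
        · exact Or.inl rfl
        · right
          have hC'T : C' ∈ T := by
            simp only [hT, Finset.mem_filter, Finset.mem_powerset]
            exact ⟨hC'C.trans hCB, Finset.nonempty_of_ne_empty hC'ne, hC'bu⟩
          exact Finset.eq_of_subset_of_card_le hC'C (hCmin C' hC'T)
      -- B \ C is a block union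
      have hsdiff : IsBlockUnion p G (B \ C) := by
        refine ⟨fun χ hχ => hB.1 χ (Finset.mem_sdiff.mp hχ).1, fun g h hg hh => ?_⟩
        rw [Finset.sum_sdiff_eq_sub hCB, hB.2 g h hg hh, hCbu.2 g h hg hh, sub_zero]
      have hss : B \ C ⊂ B := Finset.sdiff_ssubset hCB hCne
      obtain ⟨𝒮, h𝒮, hsup⟩ := ih (B \ C) hss hsdiff
      refine ⟨insert C 𝒮, ?_, ?_⟩
      · intro D hD
        rcases Finset.mem_insert.mp hD with rfl | hD
        · exact hCblock
        · exact h𝒮 D hD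
      · rw [Finset.sup_insert, ← hsup, id]
        exact (Finset.union_sdiff_of_subset hCB).symm
/-- **Osima's theorem.** If the sum `∑_{χ∈B} χ(g)χ(h)` vanishes whenever `g` is
`p`-regular and `h` is `p`-singular, then every coefficient of the central idempotent
`∑_{χ∈B} e_χ` lies in the localization of the algebraic integers at any maximal ideal
containing `p`; consequently `B` is a union of `p`-blocks. -/
theorem osima (p : ℕ) [Fact p.Prime] (G : Type) [Group G] [Fintype G]
    (B : Finset (G → ℂ))
    (hirr : ∀ χ ∈ B, IsIrrChar G χ)
    (horth : ∀ g h : G, pRegular p g → ¬ pRegular p h → ∑ χ ∈ B, χ g * χ h = 0)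
    (M : Ideal (integralClosure ℤ ℂ)) (hM : M.IsMaximal)
    (hpM : (p : integralClosure ℤ ℂ) ∈ M) :
    (∀ g : G, ∃ r s : integralClosure ℤ ℂ, s ∉ M ∧
        (∑ χ ∈ B, χ 1 / (Fintype.card G : ℂ) * χ g⁻¹) * (s : ℂ) = (r : ℂ)) ∧
    ∃ 𝒮 : Finset (Finset (G → ℂ)), (∀ C ∈ 𝒮, IsBlock p G C) ∧ B = 𝒮.sup id := by
  classical
  have hone : (1 : integralClosure ℤ ℂ) ∉ M :=
    fun h => hM.ne_top ((Ideal.eq_top_iff_one M).mpr h)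
  constructor
  · intro g
    by_cases hg : pRegular p g
    · -- the `p`-regular case
      have hginv : pRegular p g⁻¹ := by
        unfold pRegular at hg ⊢; rwa [orderOf_inv]
      obtain ⟨P⟩ : Nonempty (Sylow p G) := Sylow.nonempty
      letI : Fintype ↥(P : Subgroup G) := Fintype.ofFinite _
      set N := Fintype.card G with hN
      set c := Fintype.card ↥(P : Subgroup G) with hc
      have hcard : c = p ^ (N : ℕ).factorization p := by
        have h := Sylow.card_eq_multiplicity P
        rwa [Nat.card_eq_fintype_card, Nat.card_eq_fintype_card] at h
      have hdvd : c ∣ N := by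
        have h := Subgroup.card_subgroup_dvd_card (P : Subgroup G)
        rwa [Nat.card_eq_fintype_card, Nat.card_eq_fintype_card] at h
      set m := N / c with hm
      have hNm : N = c * m := (Nat.mul_div_cancel' hdvd).symm
      have hN0 : N ≠ 0 := Fintype.card_ne_zero
      have hc0 : c ≠ 0 := Fintype.card_ne_zero
      have hm0 : m ≠ 0 := by
        intro h; rw [h, mul_zero] at hNm; exact hN0 hNm
      have hpm : ¬ p ∣ m := by
        have : m = ordCompl[p] N := by rw [hm, hcard]
        rw [this]
        exact Nat.not_dvd_ordCompl Fact.out hN0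
      -- every nontrivial element of `P` is `p`-singular
      have hsing : ∀ x : ↥(P : Subgroup G), x ≠ 1 → ¬ pRegular p (x : G) := by
        intro x hx
        have hdv : orderOf x ∣ c := orderOf_dvd_card
        rw [hcard] at hdv
        obtain ⟨j, _, hoe⟩ := (Nat.dvd_prime_pow Fact.out).mp hdv
        have hj0 : j ≠ 0 := by
          rintro rfl
          rw [pow_zero] at hoe
          exact hx (orderOf_eq_one_iff.mp hoe)
        intro hreg
        apply hreg
        rw [Subgroup.orderOf_coe, hoe]
        exact dvd_pow_self p hj0
      -- per-character data
      have hdata : ∀ χ : {x // x ∈ B}, ∃ d : ℕ,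
          IsIntegral ℤ (χ.1 g⁻¹) ∧
            ∑ x : ↥(P : Subgroup G), χ.1 ↑x = (c : ℂ) * d := by
        rintro ⟨χ, hχ⟩
        obtain ⟨V, -, rfl⟩ := hirr χ hχ
        obtain ⟨d, hd⟩ := exists_nat_avg (P : Subgroup G) V
        exact ⟨d, char_isIntegral V g⁻¹, hd⟩
      choose d hint hsum using hdata
      refine ⟨∑ χ ∈ B.attach, (⟨χ.1 g⁻¹, hint χ⟩ : integralClosure ℤ ℂ) * (d χ : integralClosure ℤ ℂ),
        (m : integralClosure ℤ ℂ), ?_, ?_⟩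
      · -- `m ∉ M`
        intro hmem
        apply hone
        have hco : Nat.Coprime p m := (Nat.Prime.coprime_iff_not_dvd Fact.out).mpr hpm
        have hb : (1 : ℤ) = (p : ℤ) * Nat.gcdA p m + (m : ℤ) * Nat.gcdB p m := by
          have := Nat.gcd_eq_gcd_ab p m
          rwa [hco, Nat.cast_one] at this
        have hb' : (1 : integralClosure ℤ ℂ)
            = (p : integralClosure ℤ ℂ) * ((Nat.gcdA p m : ℤ) : integralClosure ℤ ℂ)
              + (m : integralClosure ℤ ℂ) * ((Nat.gcdB p m : ℤ) : integralClosure ℤ ℂ) := by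
          exact_mod_cast congrArg (fun z : ℤ => (z : integralClosure ℤ ℂ)) hb
        rw [hb']
        exact M.add_mem (M.mul_mem_right _ hpM) (M.mul_mem_right _ hmem)
      · -- the coefficient identity
        have key : ∑ χ ∈ B.attach, χ.1 g⁻¹ * (∑ x : ↥(P : Subgroup G), χ.1 ↑x)
            = ∑ χ ∈ B, χ g⁻¹ * χ 1 := by
          rw [Finset.sum_attach B (fun χ => χ g⁻¹ * ∑ x : ↥(P : Subgroup G), χ ↑x)]
          have swap : ∑ χ ∈ B, χ g⁻¹ * (∑ x : ↥(P : Subgroup G), χ ↑x)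
              = ∑ x : ↥(P : Subgroup G), ∑ χ ∈ B, χ g⁻¹ * χ ↑x := by
            simp_rw [Finset.mul_sum]
            exact Finset.sum_comm
          rw [swap, Fintype.sum_eq_single (1 : ↥(P : Subgroup G))]
          · simp
          · intro x hx
            exact horth g⁻¹ ↑x hginv (hsing x hx)
        have coeR : ((∑ χ ∈ B.attach,
              (⟨χ.1 g⁻¹, hint χ⟩ : integralClosure ℤ ℂ) * (d χ : integralClosure ℤ ℂ) :
                integralClosure ℤ ℂ) : ℂ)
            = ∑ χ ∈ B.attach, χ.1 g⁻¹ * (d χ : ℂ) := by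
          push_cast
          rfl
        have coeM : (((m : integralClosure ℤ ℂ)) : ℂ) = (m : ℂ) := by norm_cast
        rw [coeM, coeR]
        have hc0' : (c : ℂ) ≠ 0 := Nat.cast_ne_zero.mpr hc0
        have hm0' : (m : ℂ) ≠ 0 := Nat.cast_ne_zero.mpr hm0
        have expand : (∑ χ ∈ B, χ 1 / (N : ℂ) * χ g⁻¹) * (m : ℂ)
            = (∑ χ ∈ B, χ g⁻¹ * χ 1) / (c : ℂ) := by
          rw [Finset.sum_mul, Finset.sum_div]
          refine Finset.sum_congr rfl fun χ _ => ?_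
          have hNc : (N : ℂ) = (c : ℂ) * (m : ℂ) := by exact_mod_cast congrArg Nat.cast hNm
          rw [hNc]
          field_simp
        rw [expand, ← key,
          Finset.sum_congr rfl (fun χ _ => by rw [hsum χ]),
          show ∑ χ ∈ B.attach, χ.1 g⁻¹ * ((c : ℂ) * (d χ : ℂ))
              = (c : ℂ) * ∑ χ ∈ B.attach, χ.1 g⁻¹ * (d χ : ℂ) by
            rw [Finset.mul_sum]; exact Finset.sum_congr rfl fun χ _ => by ring]
        exact mul_div_cancel_left₀ _ hc0'
    · -- the `p`-singular case: the coefficient vanishes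
      refine ⟨0, 1, hone, ?_⟩
      have h1 : pRegular p (1 : G) := by
        unfold pRegular
        rw [orderOf_one, Nat.dvd_one]
        exact Nat.Prime.ne_one Fact.out
      have hg' : ¬ pRegular p g⁻¹ := by
        unfold pRegular at hg ⊢
        rwa [orderOf_inv]
      have h0 := horth 1 g⁻¹ h1 hg'
      have hsum0 : (∑ χ ∈ B, χ 1 / (Fintype.card G : ℂ) * χ g⁻¹)
          = (∑ χ ∈ B, χ 1 * χ g⁻¹) / (Fintype.card G : ℂ) := by
        rw [Finset.sum_div]
        exact Finset.sum_congr rfl fun χ _ => by ring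
      rw [hsum0, h0]
      simp
  · exact blockUnion_decomp p G B ⟨hirr, horth⟩

end
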